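/- With the regenerative representation of the infinite Mallows(q) process, almost surely for every n ≥ 1: max_{1 ≤ i ≤ S_n - 1} Y_i^↓ ≤ L^↓(Π_n) ≤ max_{1 ≤ i ≤ S_n} Y_i^↓, where L^↓(Π_n) is the length of a longest decreasing subsequence of the induced permutation Π_n and Y_i^↓ is the length of a longest decreasing subsequence of Σ_i. -/

import Mathlib

open MeasureTheory

noncomputable section

/-- The infinite Mallows insertion process built from a sequence `z` of positive
integers (indexed from 1; the value at index 0 is junk): `insertProc z i` is the
`z i`-th smallest element of `{1,2,...} \ {insertProc z 1, ..., insertProc z (i-1)}`. -/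
noncomputable def insertProc (z : ℕ → ℕ) (i : ℕ) : ℕ :=
  if i = 0 then 0
  else Nat.nth (fun m => 1 ≤ m ∧ ∀ j, j < i → insertProc z j ≠ m) (z i - 1)
termination_by i

/-- The regeneration times of `g : ℕ → ℕ`: `regenT g 0 = 0` and `regenT g (i+1)` is the
least `j > regenT g i` such that `g` maps `{regenT g i + 1, ..., j}` onto itself. -/
noncomputable def regenT (g : ℕ → ℕ) : ℕ → ℕ
  | 0 => 0
  | i + 1 => sInf {j | regenT g i < j ∧
      (Finset.Icc (regenT g i + 1) j).image g = Finset.Icc (regenT g i + 1) j}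

/-- Length of a longest decreasing subsequence of `g` along indices from `s`:
the largest `k` admitting `i_1 < ⋯ < i_k` in `s` with `g i_1 > ⋯ > g i_k`. -/
noncomputable def ldsOn (g : ℕ → ℕ) (s : Finset ℕ) : ℕ :=
  sSup {k | ∃ f : Fin k → ℕ, StrictMono f ∧ (∀ j, f j ∈ s) ∧ StrictAnti (g ∘ f)}

/-- `L^↓(Π_n)`: the length of a longest decreasing subsequence of the permutation of
`{1,...,n}` induced by the insertion process, `Π_n(i) = #{k ∈ {1,...,n} : Π̃(k) ≤ Π̃(i)}`. -/
noncomputable def mallowsLnDown (z : ℕ → ℕ) (n : ℕ) : ℕ :=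
  ldsOn (fun i => ((Finset.Icc 1 n).filter
      (fun k => insertProc z k ≤ insertProc z i)).card)
    (Finset.Icc 1 n)

/-- `Y_i^↓`: the length of a longest decreasing subsequence of the block permutation
`Σ_i(j) = Π̃(T_{i-1} + j) - T_{i-1}` of `{1, ..., T_i - T_{i-1}}`. -/
noncomputable def blockYDown (z : ℕ → ℕ) (j : ℕ) : ℕ :=
  ldsOn
    (fun i => insertProc z (regenT (insertProc z) (j - 1) + i)
      - regenT (insertProc z) (j - 1))
    (Finset.Icc 1 (regenT (insertProc z) j - regenT (insertProc z) (j - 1)))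

/-- `S_n = min {j : T_j ≥ n}`. -/
noncomputable def Sn (z : ℕ → ℕ) (n : ℕ) : ℕ :=
  sInf {j | n ≤ regenT (insertProc z) j}


lemma insertProc_avail_infinite (z : ℕ → ℕ) (i : ℕ) :
    (setOf (fun m => 1 ≤ m ∧ ∀ j, j < i → insertProc z j ≠ m)).Infinite := by
  apply Set.Infinite.mono (s := Set.Ici (1 + (Finset.range i).sup (insertProc z)))
  · intro m hm
    simp only [Set.mem_Ici] at hm
    constructor
    · omega
    · intro j hj hne
      have : insertProc z j ≤ (Finset.range i).sup (insertProc z) :=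
        Finset.le_sup (Finset.mem_range.2 hj)
      omega
  · exact Set.Ici_infinite _

lemma insertProc_spec (z : ℕ → ℕ) (i : ℕ) (hi : i ≠ 0) :
    1 ≤ insertProc z i ∧ ∀ j, j < i → insertProc z j ≠ insertProc z i := by
  have h := Nat.nth_mem_of_infinite (insertProc_avail_infinite z i) (z i - 1)
  rw [insertProc, if_neg hi]
  exact h

lemma insertProc_pos (z : ℕ → ℕ) {i : ℕ} (hi : 1 ≤ i) : 1 ≤ insertProc z i :=
  (insertProc_spec z i (by omega)).1

lemma insertProc_inj (z : ℕ → ℕ) {i j : ℕ} (hi : 1 ≤ i) (hj : 1 ≤ j)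
    (h : insertProc z i = insertProc z j) : i = j := by
  by_contra hne
  rcases Nat.lt_or_ge i j with hlt | hge
  · exact (insertProc_spec z j (by omega)).2 i hlt h
  · exact (insertProc_spec z i (by omega)).2 j (by omega) h.symm

lemma insertProc_lt (z : ℕ → ℕ) {i : ℕ} (hi : 1 ≤ i) (hz : 1 ≤ z i) :
    insertProc z i < z i + i := by
  rw [insertProc, if_neg (by omega)]
  apply Nat.nth_lt_of_lt_count
  have hcard : z i ≤ Nat.count (fun m => 1 ≤ m ∧ ∀ j, j < i → insertProc z j ≠ m)
      (z i + i) := by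
    classical
    rw [Nat.count_eq_card_filter_range]
    have hsub : (Finset.Icc 1 (z i + i - 1)) \
        ((Finset.Icc 1 (i - 1)).image (insertProc z)) ⊆
        (Finset.range (z i + i)).filter
          (fun m => 1 ≤ m ∧ ∀ j, j < i → insertProc z j ≠ m) := by
      intro m hm
      rw [Finset.mem_sdiff] at hm
      obtain ⟨hmem, hnot⟩ := hm
      rw [Finset.mem_Icc] at hmem
      simp only [Finset.mem_filter, Finset.mem_range]
      refine ⟨by omega, hmem.1, fun j hj hne => ?_⟩
      rcases Nat.eq_zero_or_pos j with rfl | hjpos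
      · rw [insertProc] at hne; simp at hne; omega
      · exact hnot (Finset.mem_image.2 ⟨j, Finset.mem_Icc.2 ⟨hjpos, by omega⟩, hne⟩)
    have hc1 : z i ≤ ((Finset.Icc 1 (z i + i - 1)) \
        ((Finset.Icc 1 (i - 1)).image (insertProc z))).card := by
      have h1 := Finset.card_le_card_sdiff_add_card (s := Finset.Icc 1 (z i + i - 1))
        (t := (Finset.Icc 1 (i - 1)).image (insertProc z))
      have h2 : ((Finset.Icc 1 (i - 1)).image (insertProc z)).card ≤ i - 1 := by
        refine le_trans (Finset.card_image_le) ?_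
        rw [Nat.card_Icc]; omega
      rw [Nat.card_Icc] at h1
      omega
    exact hc1.trans (Finset.card_le_card hsub)
  exact lt_of_lt_of_le (by omega) hcard





/-- `j` is a regeneration point of `g`. -/
def Reg (g : ℕ → ℕ) (j : ℕ) : Prop :=
  1 ≤ j ∧ (Finset.Icc 1 j).image g = Finset.Icc 1 j

variable {g : ℕ → ℕ}

lemma reg_le {T : ℕ} (hT : T = 0 ∨ Reg g T) {a : ℕ} (ha : 1 ≤ a) (haT : a ≤ T) :
    g a ≤ T := by
  rcases hT with rfl | ⟨_, himg⟩
  · omega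
  · have : g a ∈ (Finset.Icc 1 T).image g :=
      Finset.mem_image_of_mem g (Finset.mem_Icc.2 ⟨ha, haT⟩)
    rw [himg, Finset.mem_Icc] at this
    exact this.2

lemma reg_gt (hg1 : ∀ i, 1 ≤ i → 1 ≤ g i)
    (hinj : ∀ i j, 1 ≤ i → 1 ≤ j → g i = g j → i = j)
    {T : ℕ} (hT : T = 0 ∨ Reg g T) {b : ℕ} (hTb : T < b) : T < g b := by
  rcases hT with rfl | ⟨_, himg⟩
  · exact hg1 b hTb
  · by_contra h
    push_neg at h
    have hb1 : 1 ≤ g b := hg1 b (by omega)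
    have : g b ∈ Finset.Icc 1 T := Finset.mem_Icc.2 ⟨hb1, h⟩
    rw [← himg] at this
    obtain ⟨a, haI, hab⟩ := Finset.mem_image.1 this
    rw [Finset.mem_Icc] at haI
    have := hinj a b (by omega) (by omega) hab
    omega

/-- From global regeneration at `T1` (or `T1 = 0`) and at `T2 > T1`, the block
`(T1, T2]` maps onto itself. -/
lemma reg_block (hg1 : ∀ i, 1 ≤ i → 1 ≤ g i)
    (hinj : ∀ i j, 1 ≤ i → 1 ≤ j → g i = g j → i = j)
    {T1 T2 : ℕ} (h1 : T1 = 0 ∨ Reg g T1) (h2 : Reg g T2) (h12 : T1 < T2) :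
    (Finset.Icc (T1 + 1) T2).image g = Finset.Icc (T1 + 1) T2 := by
  have hsub : (Finset.Icc (T1 + 1) T2).image g ⊆ Finset.Icc (T1 + 1) T2 := by
    intro x hx
    obtain ⟨b, hbI, hbx⟩ := Finset.mem_image.1 hx
    rw [Finset.mem_Icc] at hbI
    have hgt : T1 < g b := reg_gt hg1 hinj h1 (by omega)
    have hle : g b ≤ T2 := reg_le (Or.inr h2) (by omega) hbI.2
    rw [Finset.mem_Icc]
    omega
  apply Finset.eq_of_subset_of_card_le hsub
  rw [Finset.card_image_of_injOn]
  intro a ha b hb hab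
  rw [Finset.mem_coe, Finset.mem_Icc] at ha hb
  exact hinj a b (by omega) (by omega) hab

/-- Conversely: if `(T1, j]` maps onto itself and `T1` is a regeneration point (or 0),
then `j` is a regeneration point. -/
lemma reg_of_block {T1 j : ℕ} (h1 : T1 = 0 ∨ Reg g T1) (h1j : T1 < j)
    (hb : (Finset.Icc (T1 + 1) j).image g = Finset.Icc (T1 + 1) j) : Reg g j := by
  refine ⟨by omega, ?_⟩
  have hsplit : Finset.Icc 1 j = Finset.Icc 1 T1 ∪ Finset.Icc (T1 + 1) j := by
    ext x; simp only [Finset.mem_Icc, Finset.mem_union]; omega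
  rcases h1 with rfl | ⟨_, himg⟩
  · simpa using hb
  · rw [hsplit, Finset.image_union, himg, hb]

variable (hg1 : ∀ i, 1 ≤ i → 1 ≤ g i)
    (hinj : ∀ i j, 1 ≤ i → 1 ≤ j → g i = g j → i = j)
    (hR : {j | Reg g j}.Infinite)

include hg1 hinj hR in
lemma regenT_good : ∀ i : ℕ,
    (regenT g i = 0 ∨ Reg g (regenT g i)) ∧ regenT g i < regenT g (i + 1) ∧
      Reg g (regenT g (i + 1)) := by
  have key : ∀ T : ℕ, (T = 0 ∨ Reg g T) →
      T < sInf {j | T < j ∧ (Finset.Icc (T + 1) j).image g = Finset.Icc (T + 1) j} ∧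
      Reg g (sInf {j | T < j ∧
        (Finset.Icc (T + 1) j).image g = Finset.Icc (T + 1) j}) := by
    intro T hT
    obtain ⟨j0, hj0R, hj0gt⟩ := hR.exists_gt T
    have hne : {j | T < j ∧
        (Finset.Icc (T + 1) j).image g = Finset.Icc (T + 1) j}.Nonempty :=
      ⟨j0, hj0gt, reg_block hg1 hinj hT hj0R hj0gt⟩
    have hmem := Nat.sInf_mem hne
    exact ⟨hmem.1, reg_of_block hT hmem.1 hmem.2⟩
  intro i
  induction i with
  | zero =>
    have h := key 0 (Or.inl rfl)
    exact ⟨Or.inl rfl, by rw [regenT]; exact h.1, by rw [regenT]; exact h.2⟩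
  | succ n ih =>
    have h := key (regenT g (n + 1)) (Or.inr ih.2.2)
    exact ⟨Or.inr ih.2.2, by rw [regenT]; exact h.1, by rw [regenT]; exact h.2⟩

include hg1 hinj hR in
lemma regenT_strictMono : StrictMono (regenT g) :=
  strictMono_nat_of_lt_succ fun n => (regenT_good hg1 hinj hR n).2.1

include hg1 hinj hR in
lemma regenT_reg {i : ℕ} (hi : 1 ≤ i) : Reg g (regenT g i) := by
  obtain ⟨i, rfl⟩ : ∃ k, i = k + 1 := ⟨i - 1, by omega⟩
  exact (regenT_good hg1 hinj hR i).2.2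




lemma ldsSet_zero_mem (g : ℕ → ℕ) (s : Finset ℕ) :
    0 ∈ {k | ∃ f : Fin k → ℕ, StrictMono f ∧ (∀ j, f j ∈ s) ∧ StrictAnti (g ∘ f)} :=
  ⟨Fin.elim0, fun a => a.elim0, fun a => a.elim0, fun a => a.elim0⟩

lemma ldsSet_le_card {g : ℕ → ℕ} {s : Finset ℕ} {k : ℕ}
    (hk : k ∈ {k | ∃ f : Fin k → ℕ, StrictMono f ∧ (∀ j, f j ∈ s) ∧ StrictAnti (g ∘ f)}) :
    k ≤ s.card := by
  obtain ⟨f, hmono, hmem, _⟩ := hk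
  classical
  have : (Finset.univ.image f).card = k := by
    rw [Finset.card_image_of_injective _ hmono.injective, Finset.card_univ, Fintype.card_fin]
  rw [← this]
  exact Finset.card_le_card (fun x hx => by
    obtain ⟨j, _, rfl⟩ := Finset.mem_image.1 hx; exact hmem j)

lemma ldsSet_bddAbove (g : ℕ → ℕ) (s : Finset ℕ) :
    BddAbove {k | ∃ f : Fin k → ℕ, StrictMono f ∧ (∀ j, f j ∈ s) ∧ StrictAnti (g ∘ f)} :=
  ⟨s.card, fun _ hk => ldsSet_le_card hk⟩

lemma le_ldsOn {g : ℕ → ℕ} {s : Finset ℕ} {k : ℕ}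
    (hk : k ∈ {k | ∃ f : Fin k → ℕ, StrictMono f ∧ (∀ j, f j ∈ s) ∧ StrictAnti (g ∘ f)}) :
    k ≤ ldsOn g s :=
  le_csSup (ldsSet_bddAbove g s) hk

lemma ldsOn_le {g : ℕ → ℕ} {s : Finset ℕ} {m : ℕ}
    (h : ∀ k, k ∈ {k | ∃ f : Fin k → ℕ,
      StrictMono f ∧ (∀ j, f j ∈ s) ∧ StrictAnti (g ∘ f)} → k ≤ m) :
    ldsOn g s ≤ m :=
  csSup_le ⟨0, ldsSet_zero_mem g s⟩ h

lemma ldsOn_mono (g : ℕ → ℕ) {s t : Finset ℕ} (hst : s ⊆ t) : ldsOn g s ≤ ldsOn g t :=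
  ldsOn_le fun k ⟨f, h1, h2, h3⟩ => le_ldsOn ⟨f, h1, fun j => hst (h2 j), h3⟩

/-- If `g` and `h` compare the same way on `s`, the LDS lengths agree. -/
lemma ldsOn_congr {g h : ℕ → ℕ} {s : Finset ℕ}
    (hc : ∀ a ∈ s, ∀ b ∈ s, (g a < g b ↔ h a < h b)) : ldsOn g s = ldsOn h s := by
  unfold ldsOn
  congr 1
  ext k
  constructor <;> rintro ⟨f, h1, h2, h3⟩ <;> refine ⟨f, h1, h2, fun a b hab => ?_⟩
  · exact (hc _ (h2 b) _ (h2 a)).1 (h3 hab)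
  · exact (hc _ (h2 b) _ (h2 a)).2 (h3 hab)

/-- Shifting indices by `T`. -/
lemma ldsOn_shift (g : ℕ → ℕ) (T X : ℕ) :
    ldsOn (fun i => g (T + i)) (Finset.Icc 1 X) = ldsOn g (Finset.Icc (T + 1) (T + X)) := by
  unfold ldsOn
  congr 1
  ext k
  constructor <;> rintro ⟨f, h1, h2, h3⟩
  · refine ⟨fun j => T + f j, fun a b hab => by have := h1 hab; simp only []; omega,
      fun j => ?_, fun a b hab => h3 hab⟩
    have := Finset.mem_Icc.1 (h2 j)
    simp only [Finset.mem_Icc]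
    omega
  · refine ⟨fun j => f j - T, fun a b hab => ?_, fun j => ?_, fun a b hab => ?_⟩
    · have hb := Finset.mem_Icc.1 (h2 b)
      have ha := Finset.mem_Icc.1 (h2 a)
      have := h1 hab
      simp only []
      omega
    · have := Finset.mem_Icc.1 (h2 j)
      simp only [Finset.mem_Icc]
      omega
    · have hb := Finset.mem_Icc.1 (h2 b)
      have ha := Finset.mem_Icc.1 (h2 a)
      have h3' := h3 hab
      simp only [Function.comp] at h3' ⊢
      rw [Nat.add_sub_cancel' (by omega : T ≤ f b), Nat.add_sub_cancel' (by omega : T ≤ f a)]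
      exact h3'

/-- Subtracting a constant below all values of `g` on `s`. -/
lemma ldsOn_sub {g : ℕ → ℕ} {s : Finset ℕ} {T : ℕ} (h : ∀ i ∈ s, T < g i) :
    ldsOn (fun i => g i - T) s = ldsOn g s :=
  ldsOn_congr fun a ha b hb => by
    have := h a ha; have := h b hb; omega



lemma mallowsLnDown_eq (z : ℕ → ℕ) (n : ℕ) :
    mallowsLnDown z n = ldsOn (insertProc z) (Finset.Icc 1 n) := by
  apply ldsOn_congr
  intro a ha b hb
  rw [Finset.mem_Icc] at ha hb
  have key : ∀ c d : ℕ, 1 ≤ c → c ≤ n → 1 ≤ d → d ≤ n →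
      insertProc z c < insertProc z d →
      ((Finset.Icc 1 n).filter (fun k => insertProc z k ≤ insertProc z c)).card <
      ((Finset.Icc 1 n).filter (fun k => insertProc z k ≤ insertProc z d)).card := by
    intro c d hc1 hcn hd1 hdn hcd
    apply Finset.card_lt_card
    constructor
    · intro x hx
      rw [Finset.mem_filter] at hx ⊢
      exact ⟨hx.1, by omega⟩
    · intro hsub
      have hd : d ∈ (Finset.Icc 1 n).filter
          (fun k => insertProc z k ≤ insertProc z d) :=
        Finset.mem_filter.2 ⟨Finset.mem_Icc.2 ⟨hd1, hdn⟩, le_refl _⟩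
      have := Finset.mem_filter.1 (hsub hd)
      omega
  constructor
  · intro h
    have h' : ((Finset.Icc 1 n).filter (fun k => insertProc z k ≤ insertProc z a)).card <
        ((Finset.Icc 1 n).filter (fun k => insertProc z k ≤ insertProc z b)).card := h
    rcases Nat.lt_trichotomy (insertProc z a) (insertProc z b) with hlt | heq | hgt
    · exact hlt
    · have hab := insertProc_inj z ha.1 hb.1 heq
      rw [hab] at h'
      exact absurd h' (lt_irrefl _)
    · have := key b a hb.1 hb.2 ha.1 ha.2 hgt; omega
  · intro h
    exact key a b ha.1 ha.2 hb.1 hb.2 h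

section Det

variable {z : ℕ → ℕ}

lemma blockYDown_eq (hR : {j | Reg (insertProc z) j}.Infinite) {j : ℕ} (hj : 1 ≤ j) :
    blockYDown z j = ldsOn (insertProc z)
      (Finset.Icc (regenT (insertProc z) (j - 1) + 1) (regenT (insertProc z) j)) := by
  have hg1 : ∀ i, 1 ≤ i → 1 ≤ insertProc z i := fun i hi => insertProc_pos z hi
  have hinj : ∀ i j, 1 ≤ i → 1 ≤ j → insertProc z i = insertProc z j → i = j :=
    fun i j hi hj h => insertProc_inj z hi hj h
  have hTT' : regenT (insertProc z) (j - 1) < regenT (insertProc z) j :=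
    regenT_strictMono hg1 hinj hR (show j - 1 < j by omega)
  have hTreg : regenT (insertProc z) (j - 1) = 0 ∨ Reg (insertProc z)
      (regenT (insertProc z) (j - 1)) := (regenT_good hg1 hinj hR (j - 1)).1
  have step1 : ldsOn (fun i => insertProc z (regenT (insertProc z) (j - 1) + i)
        - regenT (insertProc z) (j - 1))
      (Finset.Icc 1 (regenT (insertProc z) j - regenT (insertProc z) (j - 1)))
      = ldsOn (fun i => insertProc z (regenT (insertProc z) (j - 1) + i))
      (Finset.Icc 1 (regenT (insertProc z) j - regenT (insertProc z) (j - 1))) := by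
    apply ldsOn_sub (g := fun i => insertProc z (regenT (insertProc z) (j - 1) + i))
    intro i hi
    rw [Finset.mem_Icc] at hi
    exact reg_gt hg1 hinj hTreg (by omega)
  rw [blockYDown, step1,
    ldsOn_shift (insertProc z) (regenT (insertProc z) (j - 1))
      (regenT (insertProc z) j - regenT (insertProc z) (j - 1)),
    Nat.add_sub_cancel' hTT'.le]

theorem det_sandwich (hR : {j | Reg (insertProc z) j}.Infinite) {n : ℕ} (hn : 1 ≤ n) :
    (Finset.Icc 1 (Sn z n - 1)).sup (blockYDown z) ≤ mallowsLnDown z n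
      ∧ mallowsLnDown z n ≤ (Finset.Icc 1 (Sn z n)).sup (blockYDown z) := by
  have hg1 : ∀ i, 1 ≤ i → 1 ≤ insertProc z i := fun i hi => insertProc_pos z hi
  have hinj : ∀ i j, 1 ≤ i → 1 ≤ j → insertProc z i = insertProc z j → i = j :=
    fun i j hi hj h => insertProc_inj z hi hj h
  have hsm := regenT_strictMono hg1 hinj hR
  have hSne : {j | n ≤ regenT (insertProc z) j}.Nonempty := ⟨n, hsm.le_apply⟩
  have hSmem : n ≤ regenT (insertProc z) (Sn z n) := Nat.sInf_mem hSne
  have hS1 : 1 ≤ Sn z n := by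
    by_contra h
    have h0 : Sn z n = 0 := by omega
    rw [h0, regenT] at hSmem
    omega
  have hSpred : regenT (insertProc z) (Sn z n - 1) < n := by
    by_contra h
    push_neg at h
    have : Sn z n ≤ Sn z n - 1 := Nat.sInf_le h
    omega
  rw [mallowsLnDown_eq]
  constructor
  · apply Finset.sup_le
    intro i hi
    rw [Finset.mem_Icc] at hi
    rw [blockYDown_eq hR hi.1]
    apply ldsOn_mono
    intro x hx
    rw [Finset.mem_Icc] at hx ⊢
    have : regenT (insertProc z) i ≤ regenT (insertProc z) (Sn z n - 1) :=
      hsm.monotone hi.2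
    omega
  · apply ldsOn_le
    intro k hk
    rcases Nat.eq_zero_or_pos k with rfl | hk0
    · exact Nat.zero_le _
    obtain ⟨f, h1, h2, h3⟩ := hk
    have haI := Finset.mem_Icc.1 (h2 ⟨0, hk0⟩)
    have hMne : {m | f ⟨0, hk0⟩ ≤ regenT (insertProc z) m}.Nonempty :=
      ⟨Sn z n, show f ⟨0, hk0⟩ ≤ _ from le_trans haI.2 hSmem⟩
    have hM1 : f ⟨0, hk0⟩ ≤ regenT (insertProc z)
        (sInf {m | f ⟨0, hk0⟩ ≤ regenT (insertProc z) m}) := Nat.sInf_mem hMne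
    set M := sInf {m | f ⟨0, hk0⟩ ≤ regenT (insertProc z) m} with hM
    have hM0 : 1 ≤ M := by
      by_contra h
      have h0 : M = 0 := by omega
      rw [h0, regenT] at hM1
      omega
    have hM2 : regenT (insertProc z) (M - 1) < f ⟨0, hk0⟩ := by
      by_contra h
      push_neg at h
      have : M ≤ M - 1 := Nat.sInf_le h
      omega
    have hMS : M ≤ Sn z n := by
      by_contra h
      push_neg at h
      have : regenT (insertProc z) (Sn z n) ≤ regenT (insertProc z) (M - 1) :=
        hsm.monotone (by omega)
      omega
    have hMreg : Reg (insertProc z) (regenT (insertProc z) M) :=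
      regenT_reg hg1 hinj hR hM0
    have hblock : ∀ j : Fin k, f j ∈
        Finset.Icc (regenT (insertProc z) (M - 1) + 1) (regenT (insertProc z) M) := by
      intro j
      have hlow : f ⟨0, hk0⟩ ≤ f j := h1.monotone (Fin.le_def.mpr (Nat.zero_le _))
      rw [Finset.mem_Icc]
      refine ⟨by omega, ?_⟩
      by_contra hcon
      push_neg at hcon
      have hj0 : (⟨0, hk0⟩ : Fin k) < j := by
        rcases Nat.eq_zero_or_pos (j : ℕ) with hj | hj
        · exfalso
          have hje : j = ⟨0, hk0⟩ := by apply Fin.ext; simpa using hj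
          rw [hje] at hcon
          omega
        · exact Fin.lt_def.mpr hj
      have hanti := h3 hj0
      simp only [Function.comp_apply] at hanti
      have hga : insertProc z (f ⟨0, hk0⟩) ≤ regenT (insertProc z) M :=
        reg_le (Or.inr hMreg) (by omega) (by omega)
      have hgj : regenT (insertProc z) M < insertProc z (f j) :=
        reg_gt hg1 hinj (Or.inr hMreg) hcon
      omega
    have hle : k ≤ blockYDown z M := by
      rw [blockYDown_eq hR hM0]
      exact le_ldsOn ⟨f, h1, hblock, h3⟩
    exact hle.trans (Finset.le_sup (Finset.mem_Icc.2 ⟨hM0, hMS⟩))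

end Det


/-- The per-index bound used in the block events. -/
def blkBound (i : ℕ) : ℕ := 2 ^ (Nat.log 2 (i - 1) + 1) + 1 - i

lemma blkBound_eq {k i : ℕ} (hi : 2 ^ k + 1 ≤ i) (hi2 : i ≤ 2 ^ (k + 1)) :
    blkBound i = 2 ^ (k + 1) + 1 - i := by
  have hlog : Nat.log 2 (i - 1) = k :=
    Nat.log_eq_of_pow_le_of_lt_pow (by omega) (by omega)
  rw [blkBound, hlog]

lemma blkBound_pos {k i : ℕ} (hi : 2 ^ k + 1 ≤ i) (hi2 : i ≤ 2 ^ (k + 1)) :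
    1 ≤ blkBound i := by
  rw [blkBound_eq hi hi2]; omega

/-- `exp (-(q^t/(1-q))) ≤ 1 - q^t` for `0 < q < 1`, `1 ≤ t`. -/
lemma exp_le_one_sub_pow {q : ℝ} (hq0 : 0 < q) (hq1 : q < 1) {t : ℕ} (ht : 1 ≤ t) :
    Real.exp (-(q ^ t / (1 - q))) ≤ 1 - q ^ t := by
  set x := q ^ t with hx
  have hx0 : 0 < x := by positivity
  have hxq : x ≤ q := by
    calc x = q ^ t := rfl
    _ ≤ q ^ 1 := pow_le_pow_of_le_one hq0.le hq1.le ht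
    _ = q := pow_one q
  have hx1 : x < 1 := lt_of_le_of_lt hxq hq1
  have h1x : (0:ℝ) < 1 - x := by linarith
  have h1q : (0:ℝ) < 1 - q := by linarith
  have hstep : x / (1 - x) + 1 ≤ Real.exp (x / (1 - x)) := Real.add_one_le_exp _
  have heq : x / (1 - x) + 1 = 1 / (1 - x) := by field_simp; ring
  have h2 : 1 / (1 - x) ≤ Real.exp (x / (1 - x)) := by rw [← heq]; exact hstep
  have h3 : Real.exp (-(x / (1 - x))) ≤ 1 - x := by
    rw [Real.exp_neg]
    have hpos : 0 < 1 / (1 - x) := by positivity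
    calc (Real.exp (x / (1 - x)))⁻¹ ≤ (1 / (1 - x))⁻¹ :=
          inv_anti₀ hpos h2
    _ = 1 - x := by rw [one_div, inv_inv]
  refine le_trans (Real.exp_le_exp.2 ?_) h3
  have : x / (1 - x) ≤ x / (1 - q) :=
    div_le_div_of_nonneg_left hx0.le h1q (by linarith)
  linarith

/-- Geometric tail: `∑_{t∈Icc 1 N} q^t ≤ q/(1-q)`. -/
lemma sum_pow_Icc_le {q : ℝ} (hq0 : 0 < q) (hq1 : q < 1) (N : ℕ) :
    ∑ t ∈ Finset.Icc 1 N, q ^ t ≤ q / (1 - q) := by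
  have h1q : (0:ℝ) < 1 - q := by linarith
  have hins : Finset.range (N + 1) = insert 0 (Finset.Icc 1 N) := by
    ext x; simp [Finset.mem_range, Finset.mem_Icc]; omega
  have hsum : ∑ t ∈ Finset.range (N + 1), q ^ t
      = 1 + ∑ t ∈ Finset.Icc 1 N, q ^ t := by
    rw [hins, Finset.sum_insert (by simp)]
    simp
  have hgs := geom_sum_mul q (N + 1)
  have hpow : (0:ℝ) ≤ q ^ (N + 1) := by positivity
  rw [le_div_iff₀ h1q]
  nlinarith [hsum, hgs]


lemma reg_of_le {g : ℕ → ℕ} (hg1 : ∀ i, 1 ≤ i → 1 ≤ g i)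
    (hinj : ∀ i j, 1 ≤ i → 1 ≤ j → g i = g j → i = j)
    {j : ℕ} (hj : 1 ≤ j) (h : ∀ i, 1 ≤ i → i ≤ j → g i ≤ j) : Reg g j := by
  refine ⟨hj, ?_⟩
  have hsub : (Finset.Icc 1 j).image g ⊆ Finset.Icc 1 j := by
    intro x hx
    obtain ⟨b, hb, rfl⟩ := Finset.mem_image.1 hx
    rw [Finset.mem_Icc] at hb ⊢
    exact ⟨hg1 b hb.1, h b hb.1 hb.2⟩
  apply Finset.eq_of_subset_of_card_le hsub
  rw [Finset.card_image_of_injOn]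
  intro a ha b hb hab
  rw [Finset.mem_coe, Finset.mem_Icc] at ha hb
  exact hinj a b ha.1 hb.1 hab

lemma reg_set_infinite (z : ℕ → ℕ) (hz : ∀ i, 1 ≤ z i) (m₀ : ℕ)
    (h1 : ∀ i, m₀ ≤ i → z i ≤ i)
    (h2 : ∀ a : ℕ, ∃ k, a ≤ k ∧ ∀ i, 2 ^ k + 1 ≤ i → i ≤ 2 ^ (k + 1) →
      z i ≤ 2 ^ (k + 1) + 1 - i) :
    {j | Reg (insertProc z) j}.Infinite := by
  apply Set.infinite_of_forall_exists_gt
  intro a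
  obtain ⟨k, hkC, hk⟩ := h2 (m₀ + a + (Finset.range m₀).sup (fun i => z i + i))
  have hk2 : k < 2 ^ k := Nat.lt_two_pow_self (n := k)
  have h2k : 2 ^ k + 2 ^ k = 2 ^ (k + 1) := by ring
  have hone : 1 ≤ 2 ^ k := Nat.one_le_two_pow
  refine ⟨2 ^ (k + 1), ?_, by omega⟩
  show Reg (insertProc z) (2 ^ (k + 1))
  apply reg_of_le (fun i hi => insertProc_pos z hi)
    (fun i j hi hj h => insertProc_inj z hi hj h) (by omega)
  intro i hi1 hij
  have hlt := insertProc_lt z hi1 (hz i)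
  rcases Nat.lt_or_ge i m₀ with him | him
  · have h' : z i + i ≤ (Finset.range m₀).sup (fun i => z i + i) :=
      Finset.le_sup (f := fun i => z i + i) (Finset.mem_range.2 him)
    omega
  · rcases le_or_gt i (2 ^ k) with hik | hik
    · have := h1 i him
      omega
    · have := hk i (by omega) hij
      omega

section Prob

variable {Ω : Type*} [MeasurableSpace Ω] (P : Measure Ω) [IsProbabilityMeasure P]
    (q : ℝ) (hq0 : 0 < q) (hq1 : q < 1)
    (Z : ℕ → Ω → ℕ)
    (hmeas : ∀ i, Measurable (Z i))
    (hindep : ProbabilityTheory.iIndepFun Z P)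
    (hpos : ∀ i ω, 1 ≤ Z i ω)
    (hgeom : ∀ i k, 1 ≤ k →
      P {ω | Z i ω = k} = ENNReal.ofReal ((1 - q) * q ^ (k - 1)))

include hq0 hq1 hmeas hpos hgeom in
lemma meas_Z_le (i m : ℕ) : P {ω | Z i ω ≤ m} = ENNReal.ofReal (1 - q ^ m) := by
  classical
  have hset : {ω | Z i ω ≤ m} = ⋃ k ∈ Finset.Icc 1 m, {ω | Z i ω = k} := by
    ext ω
    simp only [Set.mem_setOf_eq, Set.mem_iUnion, Finset.mem_Icc]
    constructor
    · intro h; exact ⟨Z i ω, ⟨hpos i ω, h⟩, rfl⟩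
    · rintro ⟨k, ⟨_, hk⟩, rfl⟩; exact hk
  rw [hset, measure_biUnion_finset]
  · have : ∀ k ∈ Finset.Icc 1 m, P {ω | Z i ω = k}
        = ENNReal.ofReal ((1 - q) * q ^ (k - 1)) := by
      intro k hk
      exact hgeom i k (Finset.mem_Icc.1 hk).1
    rw [Finset.sum_congr rfl this, ← ENNReal.ofReal_sum_of_nonneg]
    · congr 1
      have hre : ∑ k ∈ Finset.Icc 1 m, (1 - q) * q ^ (k - 1)
          = ∑ k ∈ Finset.range m, (1 - q) * q ^ k := by
        apply Finset.sum_nbij' (fun k => k - 1) (fun k => k + 1) <;>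
          intros <;> simp_all [Finset.mem_Icc, Finset.mem_range] <;> omega
      rw [hre, ← Finset.mul_sum]
      have hgs := geom_sum_mul q m
      nlinarith [hgs]
    · intro k _
      have : 0 ≤ q ^ (k - 1) := by positivity
      nlinarith
  · intro a ha b hb hab
    simp only [Function.onFun, Set.disjoint_left]
    intro ω h1 h2
    simp only [Set.mem_setOf_eq] at h1 h2
    exact hab (h1 ▸ h2 ▸ rfl)
  · intro k _
    exact hmeas i (measurableSet_singleton k)

include hq0 hq1 hmeas hpos hgeom in
lemma meas_Z_gt (i m : ℕ) : P {ω | m < Z i ω} = ENNReal.ofReal (q ^ m) := by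
  have hc : {ω | m < Z i ω} = {ω | Z i ω ≤ m}ᶜ := by
    ext ω; simp only [Set.mem_setOf_eq, Set.mem_compl_iff, not_le]
  have hms : MeasurableSet {ω | Z i ω ≤ m} := hmeas i measurableSet_Iic
  rw [hc, measure_compl hms (measure_ne_top P _),
    meas_Z_le P q hq0 hq1 Z hmeas hpos hgeom i m]
  have hqm : 0 ≤ q ^ m := by positivity
  have hqm1 : q ^ m ≤ 1 := pow_le_one₀ hq0.le hq1.le
  rw [measure_univ]
  rw [← ENNReal.ofReal_one, ← ENNReal.ofReal_sub _ (by linarith)]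
  congr 1
  ring

/-- The block event: all `Z i` for `i` in the `k`-th dyadic block are small. -/
def FBlk (Z : ℕ → Ω → ℕ) (k : ℕ) : Set Ω :=
  ⋂ i ∈ Finset.Icc (2 ^ k + 1) (2 ^ (k + 1)), {ω | Z i ω ≤ blkBound i}

include hmeas in
lemma FBlk_measurable (k : ℕ) : MeasurableSet (FBlk Z k) := by
  unfold FBlk
  exact Finset.measurableSet_biInter _ (fun i _ => hmeas i measurableSet_Iic)

include hindep in
lemma meas_biInter_Z (t : Finset ℕ) (b : ℕ → ℕ) :
    P (⋂ i ∈ t, {ω | Z i ω ≤ b i}) = ∏ i ∈ t, P {ω | Z i ω ≤ b i} :=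
  hindep.meas_biInter (fun i _ => ⟨Set.Iic (b i), trivial, rfl⟩)

include hmeas hindep in
lemma FBlk_iIndepSet : ProbabilityTheory.iIndepSet (FBlk Z) P := by
  classical
  rw [ProbabilityTheory.iIndepSet_iff_iIndep]
  apply ProbabilityTheory.iIndepSets.iIndep (π := fun k => {FBlk Z k})
  · intro k
    apply MeasurableSpace.generateFrom_le
    rintro t rfl
    exact FBlk_measurable Z hmeas k
  · exact fun k => IsPiSystem.singleton _
  · exact fun k => rfl
  · rw [ProbabilityTheory.iIndepSets_iff]
    intro K f hf
    have hfF : ∀ k ∈ K, f k = FBlk Z k := fun k hk => hf k hk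
    have hblk : ∀ k, ∀ i ∈ Finset.Icc (2 ^ k + 1) (2 ^ (k + 1)),
        i ∈ (fun k => Finset.Icc (2 ^ k + 1) (2 ^ (k + 1))) k := fun _ _ h => h
    have hdisj : (K : Set ℕ).PairwiseDisjoint
        (fun k => Finset.Icc (2 ^ k + 1) (2 ^ (k + 1))) := by
      intro a _ b _ hab
      simp only [Function.onFun, Finset.disjoint_left, Finset.mem_Icc]
      intro x hx1 hx2
      rcases Nat.lt_or_ge a b with h | h
      · have : 2 ^ (a + 1) ≤ 2 ^ b := Nat.pow_le_pow_right (by norm_num) (by omega)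
        omega
      · have hba : b < a := by omega
        have : 2 ^ (b + 1) ≤ 2 ^ a := Nat.pow_le_pow_right (by norm_num) (by omega)
        omega
    have hunion : (⋂ k ∈ K, FBlk Z k)
        = ⋂ i ∈ K.biUnion (fun k => Finset.Icc (2 ^ k + 1) (2 ^ (k + 1))),
          {ω | Z i ω ≤ blkBound i} := by
      ext ω
      simp only [Set.mem_iInter, Finset.mem_biUnion, FBlk]
      constructor
      · rintro h i ⟨k, hk, hik⟩
        exact h k hk i hik
      · intro h k hk i hik
        exact h i ⟨k, hk, hik⟩
    calc P (⋂ k ∈ K, f k) = P (⋂ k ∈ K, FBlk Z k) := by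
          congr 1; exact Set.iInter₂_congr hfF
    _ = ∏ i ∈ K.biUnion (fun k => Finset.Icc (2 ^ k + 1) (2 ^ (k + 1))),
          P {ω | Z i ω ≤ blkBound i} := by
          rw [hunion]; exact meas_biInter_Z P Z hindep _ _
    _ = ∏ k ∈ K, ∏ i ∈ Finset.Icc (2 ^ k + 1) (2 ^ (k + 1)),
          P {ω | Z i ω ≤ blkBound i} := Finset.prod_biUnion hdisj
    _ = ∏ k ∈ K, P (FBlk Z k) := by
          refine Finset.prod_congr rfl fun k _ => ?_
          rw [FBlk, meas_biInter_Z P Z hindep]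
    _ = ∏ k ∈ K, P (f k) := by
          refine Finset.prod_congr rfl fun k hk => ?_
          rw [hfF k hk]

include hq0 hq1 hmeas hindep hpos hgeom in
lemma FBlk_meas_lower (k : ℕ) :
    ENNReal.ofReal (Real.exp (-(q / (1 - q) ^ 2))) ≤ P (FBlk Z k) := by
  classical
  have h1q : (0:ℝ) < 1 - q := by linarith
  rw [FBlk, meas_biInter_Z P Z hindep]
  have hval : ∀ i ∈ Finset.Icc (2 ^ k + 1) (2 ^ (k + 1)),
      P {ω | Z i ω ≤ blkBound i} = ENNReal.ofReal (1 - q ^ blkBound i) :=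
    fun i _ => meas_Z_le P q hq0 hq1 Z hmeas hpos hgeom i _
  have hnn : ∀ i ∈ Finset.Icc (2 ^ k + 1) (2 ^ (k + 1)),
      (0:ℝ) ≤ 1 - q ^ blkBound i := by
    intro i _
    have : q ^ blkBound i ≤ 1 := pow_le_one₀ hq0.le hq1.le
    linarith
  rw [Finset.prod_congr rfl hval, ← ENNReal.ofReal_prod_of_nonneg hnn]
  apply ENNReal.ofReal_le_ofReal
  have hfac : ∀ i ∈ Finset.Icc (2 ^ k + 1) (2 ^ (k + 1)),
      Real.exp (-(q ^ blkBound i / (1 - q))) ≤ 1 - q ^ blkBound i := by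
    intro i hi
    rw [Finset.mem_Icc] at hi
    exact exp_le_one_sub_pow hq0 hq1 (blkBound_pos hi.1 hi.2)
  have hS : ∑ i ∈ Finset.Icc (2 ^ k + 1) (2 ^ (k + 1)), q ^ blkBound i
      ≤ q / (1 - q) := by
    have hre : ∑ i ∈ Finset.Icc (2 ^ k + 1) (2 ^ (k + 1)), q ^ blkBound i
        = ∑ t ∈ Finset.Icc 1 (2 ^ k), q ^ t := by
      apply Finset.sum_nbij' (fun i => 2 ^ (k + 1) + 1 - i)
        (fun t => 2 ^ (k + 1) + 1 - t)
      · intro i hi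
        rw [Finset.mem_Icc] at hi ⊢
        have h2 : 2 ^ k + 2 ^ k = 2 ^ (k + 1) := by ring
        omega
      · intro t ht
        rw [Finset.mem_Icc] at ht ⊢
        have h2 : 2 ^ k + 2 ^ k = 2 ^ (k + 1) := by ring
        omega
      · intro i hi; rw [Finset.mem_Icc] at hi; omega
      · intro t ht; rw [Finset.mem_Icc] at ht; omega
      · intro i hi
        rw [Finset.mem_Icc] at hi
        rw [blkBound_eq hi.1 hi.2]
    rw [hre]
    exact sum_pow_Icc_le hq0 hq1 _
  calc Real.exp (-(q / (1 - q) ^ 2))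
      ≤ Real.exp (∑ i ∈ Finset.Icc (2 ^ k + 1) (2 ^ (k + 1)),
          -(q ^ blkBound i / (1 - q))) := by
        apply Real.exp_le_exp.2
        rw [Finset.sum_neg_distrib, ← Finset.sum_div, neg_le_neg_iff]
        have h4 : (∑ i ∈ Finset.Icc (2 ^ k + 1) (2 ^ (k + 1)), q ^ blkBound i)
            / (1 - q) ≤ (q / (1 - q)) / (1 - q) := by gcongr
        rw [div_div] at h4
        calc (∑ i ∈ Finset.Icc (2 ^ k + 1) (2 ^ (k + 1)), q ^ blkBound i) / (1 - q)
            ≤ q / ((1 - q) * (1 - q)) := h4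
        _ = q / (1 - q) ^ 2 := by rw [sq]
  _ = ∏ i ∈ Finset.Icc (2 ^ k + 1) (2 ^ (k + 1)),
        Real.exp (-(q ^ blkBound i / (1 - q))) := Real.exp_sum _ _
  _ ≤ ∏ i ∈ Finset.Icc (2 ^ k + 1) (2 ^ (k + 1)), (1 - q ^ blkBound i) :=
        Finset.prod_le_prod (fun i _ => (Real.exp_pos _).le) hfac

include hq0 hq1 hmeas hindep hpos hgeom in
lemma FBlk_limsup : P (Filter.limsup (FBlk Z) Filter.atTop) = 1 := by
  apply ProbabilityTheory.measure_limsup_eq_one (FBlk_measurable Z hmeas)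
    (FBlk_iIndepSet P Z hmeas hindep)
  have hpos' : ENNReal.ofReal (Real.exp (-(q / (1 - q) ^ 2))) ≠ 0 := by
    simp only [ne_eq, ENNReal.ofReal_eq_zero, not_le]
    exact Real.exp_pos _
  apply eq_top_iff.2
  calc (⊤ : ENNReal) = ∑' _ : ℕ, ENNReal.ofReal (Real.exp (-(q / (1 - q) ^ 2))) :=
        (ENNReal.tsum_const_eq_top_of_ne_zero hpos').symm
  _ ≤ ∑' k, P (FBlk Z k) :=
        ENNReal.tsum_le_tsum fun k => FBlk_meas_lower P q hq0 hq1 Z hmeas hindep hpos hgeom k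

include hq0 hq1 hmeas hpos hgeom in
lemma Z_eventually_le : ∀ᵐ ω ∂P, ∃ m : ℕ, ∀ i, m ≤ i → Z i ω ≤ i := by
  have hzero : P (Filter.limsup (fun i => {ω | i < Z i ω}) Filter.atTop) = 0 := by
    apply measure_limsup_atTop_eq_zero
    have : ∀ i : ℕ, P {ω | i < Z i ω} = ENNReal.ofReal (q ^ i) :=
      fun i => meas_Z_gt P q hq0 hq1 Z hmeas hpos hgeom i i
    rw [tsum_congr this, ← ENNReal.ofReal_tsum_of_nonneg
      (fun i => by positivity) (summable_geometric_of_lt_one hq0.le hq1)]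
    exact ENNReal.ofReal_ne_top
  have hae : ∀ᵐ ω ∂P, ω ∉ Filter.limsup (fun i => {ω | i < Z i ω}) Filter.atTop :=
    measure_eq_zero_iff_ae_notMem.1 hzero
  filter_upwards [hae] with ω hω
  rw [Filter.mem_limsup_iff_frequently_mem, Filter.not_frequently] at hω
  obtain ⟨m, hm⟩ := Filter.eventually_atTop.1 hω
  refine ⟨m, fun i hi => ?_⟩
  have := hm i hi
  simpa using this

include hq0 hq1 hmeas hindep hpos hgeom in
lemma FBlk_ae : ∀ᵐ ω ∂P, ∃ᶠ k in Filter.atTop, ω ∈ FBlk Z k := by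
  have h1 := FBlk_limsup P q hq0 hq1 Z hmeas hindep hpos hgeom
  have hms : MeasurableSet (Filter.limsup (FBlk Z) Filter.atTop) :=
    MeasurableSet.measurableSet_limsup (FBlk_measurable Z hmeas)
  have h0 : P (Filter.limsup (FBlk Z) Filter.atTop)ᶜ = 0 :=
    (prob_compl_eq_zero_iff hms).2 h1
  have hae := measure_eq_zero_iff_ae_notMem.1 h0
  filter_upwards [hae] with ω hω
  rw [Set.notMem_compl_iff] at hω
  exact Filter.mem_limsup_iff_frequently_mem.1 hω

end Prob

/-- **Sandwiching the LDS by block LDS's.** For the infinite Mallows(q) process, almost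
surely, for every `n ≥ 1`:
`max_{1 ≤ i ≤ S_n - 1} Y_i^↓ ≤ L^↓(Π_n) ≤ max_{1 ≤ i ≤ S_n} Y_i^↓`. -/
theorem lds_regenerative_sandwich
    {Ω : Type*} [MeasurableSpace Ω] (P : Measure Ω) [IsProbabilityMeasure P]
    (q : ℝ) (hq0 : 0 < q) (hq1 : q < 1)
    (Z : ℕ → Ω → ℕ)
    (hmeas : ∀ i, Measurable (Z i))
    (hindep : ProbabilityTheory.iIndepFun Z P)
    (hpos : ∀ i ω, 1 ≤ Z i ω)
    (hgeom : ∀ i k, 1 ≤ k →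
      P {ω | Z i ω = k} = ENNReal.ofReal ((1 - q) * q ^ (k - 1))) :
    ∀ᵐ ω ∂P, ∀ n : ℕ, 1 ≤ n →
      (Finset.Icc 1 (Sn (fun i => Z i ω) n - 1)).sup (blockYDown (fun i => Z i ω))
          ≤ mallowsLnDown (fun i => Z i ω) n
        ∧ mallowsLnDown (fun i => Z i ω) n
          ≤ (Finset.Icc 1 (Sn (fun i => Z i ω) n)).sup (blockYDown (fun i => Z i ω)) := by
  filter_upwards [Z_eventually_le P q hq0 hq1 Z hmeas hpos hgeom,
    FBlk_ae P q hq0 hq1 Z hmeas hindep hpos hgeom] with ω hev hfreq n hn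
  obtain ⟨m₀, hm₀⟩ := hev
  have hR : {j | Reg (insertProc (fun i => Z i ω)) j}.Infinite := by
    apply reg_set_infinite _ (fun i => hpos i ω) m₀ hm₀
    intro a
    obtain ⟨k, hka, hmem⟩ := Filter.frequently_atTop.1 hfreq a
    refine ⟨k, hka, fun i hi1 hi2 => ?_⟩
    simp only [FBlk, Set.mem_iInter] at hmem
    have := hmem i (Finset.mem_Icc.2 ⟨hi1, hi2⟩)
    rw [Set.mem_setOf_eq, blkBound_eq hi1 hi2] at this
    exact this
  exact det_sandwich hR hn


end
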